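/- The set of minimal homeomorphisms of a compact metric space X is a G_δ subset of the space Homeo(X) of homeomorphisms of X equipped with the uniform metric. Specifically, Homeo^min(X) = ⋂_{ε ∈ ℚ⁺} ⋃_{M ∈ ℕ} U^min_{M,ε}, where U^min_{M,ε} = {ψ ∈ Homeo(X) : ∀ x ∈ X, {x, ψ(x), …, ψ^M(x)} is ε-dense in X}, and each U^min_{M,ε} is open. -/
import Mathlib


open Filter Finset

/-- The uniform metric `d₀(φ,ψ) = max(sup_x d(φ x, ψ x), sup_x d(φ⁻¹ x, ψ⁻¹ x))`
on the homeomorphism group of a compact metric space. -/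
noncomputable instance homeoMetricSpace {X : Type*} [MetricSpace X] [CompactSpace X] :
    MetricSpace (X ≃ₜ X) :=
  MetricSpace.induced
    (fun φ : X ≃ₜ X =>
      ((⟨⇑φ, φ.continuous⟩ : C(X, X)), (⟨⇑φ.symm, φ.symm.continuous⟩ : C(X, X))))
    (fun φ ψ h => by
      apply Homeomorph.ext
      intro x
      exact DFunLike.congr_fun (congrArg Prod.fst h) x)
    inferInstance

lemma homeo_dist_apply_le {X : Type*} [MetricSpace X] [CompactSpace X]
    (φ ψ : X ≃ₜ X) (x : X) : dist (φ x) (ψ x) ≤ dist φ ψ := by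
  have h : dist φ ψ =
      max (dist (⟨⇑φ, φ.continuous⟩ : C(X, X)) (⟨⇑ψ, ψ.continuous⟩ : C(X, X)))
        (dist (⟨⇑φ.symm, φ.symm.continuous⟩ : C(X, X))
          (⟨⇑ψ.symm, ψ.symm.continuous⟩ : C(X, X))) := rfl
  rw [h]
  exact le_trans
    (ContinuousMap.dist_apply_le_dist (f := (⟨⇑φ, φ.continuous⟩ : C(X, X)))
      (g := (⟨⇑ψ, ψ.continuous⟩ : C(X, X))) x) (le_max_left _ _)

/-- Exhaustion by monotone opens of a compact space gives a uniform index. -/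
lemma compact_exists_nat {Y : Type*} [TopologicalSpace Y] [CompactSpace Y]
    (P : ℕ → Y → Prop) (hopen : ∀ n, IsOpen {y | P n y})
    (hmono : ∀ m n, m ≤ n → ∀ y, P m y → P n y)
    (hcov : ∀ y, ∃ n, P n y) : ∃ n, ∀ y, P n y := by
  obtain ⟨t, ht⟩ := isCompact_univ.elim_finite_subcover (fun n => {y | P n y}) hopen
    (fun y _ => Set.mem_iUnion.2 (hcov y))
  refine ⟨t.sup id, fun y => ?_⟩
  obtain ⟨n, hn, hy⟩ := Set.mem_iUnion₂.1 (ht (Set.mem_univ y))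
  exact hmono n (t.sup id) (Finset.le_sup (f := id) hn) y hy

lemma isOpen_aux {X : Type*} [MetricSpace X] [CompactSpace X] (ψ : X ≃ₜ X) (M : ℕ) (c : ℝ) :
    IsOpen {p : X × X | ∃ i ≤ M, dist p.2 ((⇑ψ)^[i] p.1) < c} := by
  have : {p : X × X | ∃ i ≤ M, dist p.2 ((⇑ψ)^[i] p.1) < c} =
      ⋃ i ∈ Finset.range (M + 1), {p : X × X | dist p.2 ((⇑ψ)^[i] p.1) < c} := by
    ext p; simp [Nat.lt_succ_iff]
  rw [this]
  exact isOpen_biUnion fun i _ =>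
    isOpen_lt (continuous_snd.dist ((ψ.continuous.iterate i).comp continuous_fst))
      continuous_const

/-- Uniform approximation of iterates. -/
lemma iter_approx {X : Type*} [MetricSpace X] [CompactSpace X] (ψ : X ≃ₜ X) (M : ℕ)
    {η : ℝ} (hη : 0 < η) :
    ∃ δ > 0, ∀ φ : X ≃ₜ X, (∀ x, dist (φ x) (ψ x) < δ) →
      ∀ i ≤ M, ∀ x, dist ((⇑φ)^[i] x) ((⇑ψ)^[i] x) < η := by
  induction M generalizing η with
  | zero =>
    exact ⟨η, hη, fun φ _ i hi x => by
      interval_cases i; simpa using hη⟩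
  | succ M ih =>
    have hψu : UniformContinuous (⇑ψ) := CompactSpace.uniformContinuous_of_continuous ψ.continuous
    obtain ⟨δ₁, hδ₁, hδ₁'⟩ := Metric.uniformContinuous_iff.1 hψu (η / 2) (by linarith)
    obtain ⟨δ', hδ', hδ''⟩ := ih (η := min (η / 2) δ₁) (lt_min (by linarith) hδ₁)
    refine ⟨min δ' (η / 2), lt_min hδ' (by linarith), fun φ hφ i hi x => ?_⟩
    have hφ' : ∀ x, dist (φ x) (ψ x) < δ' := fun x => lt_of_lt_of_le (hφ x) (min_le_left _ _)
    rcases Nat.lt_succ_iff_lt_or_eq.1 (Nat.lt_succ_of_le hi) with h | h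
    · exact lt_of_lt_of_le (hδ'' φ hφ' i (Nat.lt_succ_iff.1 h) x)
        (le_trans (min_le_left _ _) (by linarith))
    · subst h
      rw [Function.iterate_succ_apply', Function.iterate_succ_apply']
      have h1 : dist (φ ((⇑φ)^[M] x)) (ψ ((⇑φ)^[M] x)) < η / 2 :=
        lt_of_lt_of_le (hφ _) (min_le_right _ _)
      have h2 : dist ((⇑φ)^[M] x) ((⇑ψ)^[M] x) < δ₁ :=
        lt_of_lt_of_le (hδ'' φ hφ' M le_rfl x) (min_le_right _ _)
      have h3 : dist (ψ ((⇑φ)^[M] x)) (ψ ((⇑ψ)^[M] x)) < η / 2 := hδ₁' h2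
      calc dist (φ ((⇑φ)^[M] x)) (ψ ((⇑ψ)^[M] x))
          ≤ dist (φ ((⇑φ)^[M] x)) (ψ ((⇑φ)^[M] x)) +
            dist (ψ ((⇑φ)^[M] x)) (ψ ((⇑ψ)^[M] x)) := dist_triangle _ _ _
        _ < η := by linarith

lemma isOpen_Umin {X : Type*} [MetricSpace X] [CompactSpace X] (M : ℕ) (ε : ℝ) (_hε : 0 < ε) :
    IsOpen {ψ : X ≃ₜ X | ∀ x z : X, ∃ i ≤ M, dist z ((⇑ψ)^[i] x) < ε} := by
  rw [Metric.isOpen_iff]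
  intro ψ hψ
  -- find a uniform margin
  obtain ⟨N, hN⟩ := compact_exists_nat (Y := X × X)
    (fun n p => ∃ i ≤ M, dist p.2 ((⇑ψ)^[i] p.1) < ε - 1 / (n + 1))
    (fun n => isOpen_aux ψ M _)
    (fun m n hmn p => by
      rintro ⟨i, hi, hd⟩
      refine ⟨i, hi, lt_of_lt_of_le hd ?_⟩
      have : (1 : ℝ) / (n + 1) ≤ 1 / (m + 1) := by
        apply one_div_le_one_div_of_le (by positivity)
        exact_mod_cast Nat.succ_le_succ hmn
      linarith)
    (fun p => by
      obtain ⟨i, hi, hd⟩ := hψ p.1 p.2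
      obtain ⟨n, hn⟩ := exists_nat_one_div_lt (sub_pos.2 hd)
      exact ⟨n, i, hi, by linarith⟩)
  have hη : (0 : ℝ) < 1 / (N + 1) := by positivity
  obtain ⟨δ, hδ, hδ'⟩ := iter_approx ψ M hη
  refine ⟨δ, hδ, fun φ hφ x z => ?_⟩
  have hφ' : ∀ x, dist (φ x) (ψ x) < δ :=
    fun x => lt_of_le_of_lt (homeo_dist_apply_le φ ψ x) hφ
  obtain ⟨i, hi, hd⟩ := hN (x, z)
  refine ⟨i, hi, ?_⟩
  have := hδ' φ hφ' i hi x
  calc dist z ((⇑φ)^[i] x)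
      ≤ dist z ((⇑ψ)^[i] x) + dist ((⇑ψ)^[i] x) ((⇑φ)^[i] x) := dist_triangle _ _ _
    _ < (ε - 1 / (N + 1)) + 1 / (N + 1) := by
        rw [dist_comm ((⇑ψ)^[i] x)]; exact add_lt_add hd this
    _ = ε := by ring

/-- If every full (two-sided) orbit is dense, every forward orbit is dense. -/
lemma forward_dense {X : Type*} [MetricSpace X] [CompactSpace X] (ψ : X ≃ₜ X)
    (h : ∀ x : X, Dense {y | ∃ n : ℕ, y = (⇑ψ)^[n] x ∨ y = (⇑ψ.symm)^[n] x}) (x : X) :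
    Dense {y | ∃ n : ℕ, y = (⇑ψ)^[n] x} := by
  set F : ℕ → Set X := fun n => closure {y | ∃ m : ℕ, y = (⇑ψ)^[m + n] x} with hF
  have hset : ∀ n : ℕ, ⇑ψ '' {y | ∃ m : ℕ, y = (⇑ψ)^[m + n] x} =
      {y | ∃ m : ℕ, y = (⇑ψ)^[m + (n + 1)] x} := by
    intro n
    ext y
    constructor
    · rintro ⟨a, ⟨m, rfl⟩, rfl⟩
      exact ⟨m, by rw [← Function.iterate_succ_apply' (⇑ψ) (m + n) x]; congr 1⟩
    · rintro ⟨m, rfl⟩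
      refine ⟨(⇑ψ)^[m + n] x, ⟨m, rfl⟩, ?_⟩
      rw [← Function.iterate_succ_apply' (⇑ψ) (m + n) x]
      congr 1
  have himg : ∀ n, ⇑ψ '' F n = F (n + 1) := by
    intro n
    rw [hF]
    simp only
    rw [ψ.image_closure, hset n]
  have hcl : ∀ n, IsClosed (F n) := fun n => isClosed_closure
  have hne : ∀ n, (F n).Nonempty := fun n => ⟨(⇑ψ)^[n] x, subset_closure ⟨0, by simp⟩⟩
  have hanti : ∀ n, F (n + 1) ⊆ F n := by
    intro n
    apply closure_mono
    rintro y ⟨m, rfl⟩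
    exact ⟨m + 1, by congr 1; omega⟩
  set K : Set X := ⋂ n, F n with hK
  have hKne : K.Nonempty :=
    IsCompact.nonempty_iInter_of_sequence_nonempty_isCompact_isClosed F hanti hne
      (hcl 0).isCompact hcl
  have hKcl : IsClosed K := isClosed_iInter hcl
  obtain ⟨y, hy⟩ := hKne
  -- K is invariant under ψ and ψ.symm
  have hfwd : ∀ z ∈ K, ψ z ∈ K := by
    intro z hz
    refine Set.mem_iInter.2 fun n => hanti n ?_
    rw [← himg n]
    exact ⟨z, Set.mem_iInter.1 hz n, rfl⟩
  have hbwd : ∀ z ∈ K, ψ.symm z ∈ K := by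
    intro z hz
    refine Set.mem_iInter.2 fun n => ?_
    have hz' : z ∈ F (n + 1) := Set.mem_iInter.1 hz (n + 1)
    rw [← himg n] at hz'
    obtain ⟨a, ha, rfl⟩ := hz'
    simpa using ha
  have horb : ∀ n : ℕ, (⇑ψ)^[n] y ∈ K ∧ (⇑ψ.symm)^[n] y ∈ K := by
    intro n
    induction n with
    | zero => exact ⟨hy, hy⟩
    | succ n ihn =>
      constructor
      · rw [Function.iterate_succ_apply']; exact hfwd _ ihn.1
      · rw [Function.iterate_succ_apply']; exact hbwd _ ihn.2
  have hsub : {z | ∃ n : ℕ, z = (⇑ψ)^[n] y ∨ z = (⇑ψ.symm)^[n] y} ⊆ K := by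
    rintro z ⟨n, h1 | h1⟩
    · rw [h1]; exact (horb n).1
    · rw [h1]; exact (horb n).2
  have hKuniv : K = Set.univ := by
    apply Set.eq_univ_of_univ_subset
    calc Set.univ = closure {z | ∃ n : ℕ, z = (⇑ψ)^[n] y ∨ z = (⇑ψ.symm)^[n] y} :=
          ((h y).closure_eq).symm
      _ ⊆ K := hKcl.closure_subset_iff.2 hsub
  have hF0 : F 0 = Set.univ := Set.eq_univ_of_univ_subset
    (hKuniv ▸ Set.iInter_subset F 0)
  have : Dense (F 0) := by rw [hF0]; exact dense_univ
  rw [hF] at this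
  simp only at this
  rw [dense_closure] at this
  have h0 : {y | ∃ m : ℕ, y = (⇑ψ)^[m + 0] x} = {y | ∃ n : ℕ, y = (⇑ψ)^[n] x} := by
    simp
  rwa [h0] at this

theorem stmt_2 {X : Type*} [MetricSpace X] [CompactSpace X] :
    (∀ (M : ℕ) (ε : ℝ), 0 < ε →
      IsOpen {ψ : X ≃ₜ X | ∀ x z : X, ∃ i ≤ M, dist z ((⇑ψ)^[i] x) < ε}) ∧
    ({ψ : X ≃ₜ X | ∀ x : X,
        Dense {y | ∃ n : ℕ, y = (⇑ψ)^[n] x ∨ y = (⇑ψ.symm)^[n] x}} =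
      ⋂ (ε : ℚ) (_ : 0 < ε), ⋃ M : ℕ,
        {ψ : X ≃ₜ X | ∀ x z : X, ∃ i ≤ M, dist z ((⇑ψ)^[i] x) < (ε : ℝ)}) ∧
    IsGδ {ψ : X ≃ₜ X | ∀ x : X,
        Dense {y | ∃ n : ℕ, y = (⇑ψ)^[n] x ∨ y = (⇑ψ.symm)^[n] x}} := by
  have hopen : ∀ (M : ℕ) (ε : ℝ), 0 < ε →
      IsOpen {ψ : X ≃ₜ X | ∀ x z : X, ∃ i ≤ M, dist z ((⇑ψ)^[i] x) < ε} :=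
    fun M ε hε => isOpen_Umin M ε hε
  have heq : {ψ : X ≃ₜ X | ∀ x : X,
        Dense {y | ∃ n : ℕ, y = (⇑ψ)^[n] x ∨ y = (⇑ψ.symm)^[n] x}} =
      ⋂ (ε : ℚ) (_ : 0 < ε), ⋃ M : ℕ,
        {ψ : X ≃ₜ X | ∀ x z : X, ∃ i ≤ M, dist z ((⇑ψ)^[i] x) < (ε : ℝ)} := by
    ext ψ
    simp only [Set.mem_setOf_eq, Set.mem_iInter, Set.mem_iUnion]
    constructor
    · intro h ε hε
      have hfwd := forward_dense ψ h
      have hεR : (0 : ℝ) < (ε : ℝ) := by exact_mod_cast hε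
      obtain ⟨M, hM⟩ := compact_exists_nat (Y := X × X)
        (fun M p => ∃ i ≤ M, dist p.2 ((⇑ψ)^[i] p.1) < (ε : ℝ))
        (fun M => isOpen_aux ψ M _)
        (fun m n hmn p => by rintro ⟨i, hi, hd⟩; exact ⟨i, le_trans hi hmn, hd⟩)
        (fun p => by
          obtain ⟨w, hw1, m, rfl⟩ :=
            Metric.dense_iff.1 (hfwd p.1) p.2 (ε : ℝ) hεR
          exact ⟨m, m, le_rfl, by rwa [Metric.mem_ball, dist_comm] at hw1⟩)
      exact ⟨M, fun x z => hM (x, z)⟩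
    · intro h x
      rw [Metric.dense_iff]
      intro z r hr
      obtain ⟨q, hq0, hqr⟩ := exists_rat_btwn hr
      have hq0' : (0 : ℚ) < q := by exact_mod_cast hq0
      obtain ⟨M, hM⟩ := h q hq0'
      obtain ⟨i, _, hd⟩ := hM x z
      exact ⟨(⇑ψ)^[i] x, Metric.mem_ball.2 (by rw [dist_comm]; linarith), ⟨i, Or.inl rfl⟩⟩
  refine ⟨hopen, heq, ?_⟩
  rw [heq]
  refine IsGδ.biInter (Set.to_countable _) fun ε hε => ?_
  exact (isOpen_iUnion fun M => hopen M (ε : ℝ) (by exact_mod_cast hε)).isGδ
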